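/- Let D₁,…,Dₘ partition the nonidentity elements of an abelian group G of order v = km+1 into m subsets each of size k > 1. Then {D₁,…,Dₘ} is a (v,m,k,λ)-SEDF in G if and only if each D_j is a (v, k, k−λ−1, k−λ) partial difference set in G. -/
import Mathlib


open Finset

/-- `{D j}` is a `(v, m, k, lam)`-strong external difference family in the
abelian group `G`: mutually disjoint `k`-subsets whose defining group-ring
identity `D_j · (∑_{i≠j} D_i^{(-1)}) = lam (G - 1)` holds in `ℤ[G]`. -/
def IsSEDF {G : Type} [CommGroup G] [Fintype G] [DecidableEq G]
    (v m k lam : ℕ) (D : Fin m → Finset G) : Prop :=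
  Fintype.card G = v ∧ 2 ≤ m ∧ (∀ i, (D i).card = k) ∧
  (∀ i j, i ≠ j → Disjoint (D i) (D j)) ∧
  ∀ j, (∑ d ∈ D j, MonoidAlgebra.of ℤ G d) *
      (∑ i ∈ Finset.univ.erase j, ∑ d ∈ D i, MonoidAlgebra.of ℤ G d⁻¹)
    = (lam : ℤ) • ((∑ g : G, MonoidAlgebra.of ℤ G g) - 1)

theorem near_complete_sedf_iff_pds {G : Type} [CommGroup G] [Fintype G]
    [DecidableEq G] {v m k lam : ℕ} (D : Fin m → Finset G)
    (hv : v = k * m + 1) (hcard : Fintype.card G = v) (hk : 1 < k) (hm : 2 ≤ m)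
    (hsize : ∀ i, (D i).card = k)
    (hdisj : ∀ i j, i ≠ j → Disjoint (D i) (D j))
    (hpart : Finset.univ.biUnion D = Finset.univ.erase (1 : G)) :
    IsSEDF v m k lam D ↔
      ∀ j, (∑ d ∈ D j, MonoidAlgebra.of ℤ G d) *
          (∑ d ∈ D j, MonoidAlgebra.of ℤ G d⁻¹)
        = ((k : ℤ) - ((k : ℤ) - (lam : ℤ))) • (1 : MonoidAlgebra ℤ G)
          + ((k : ℤ) - (lam : ℤ) - 1) • (∑ d ∈ D j, MonoidAlgebra.of ℤ G d)
          + ((k : ℤ) - (lam : ℤ)) •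
              ((∑ g : G, MonoidAlgebra.of ℤ G g) - ∑ d ∈ D j, MonoidAlgebra.of ℤ G d) := by
  set S : MonoidAlgebra ℤ G := ∑ g : G, MonoidAlgebra.of ℤ G g with hSdef
  -- the sum over all i of the inverted blocks is S - 1
  have htot : ∑ i : Fin m, ∑ d ∈ D i, MonoidAlgebra.of ℤ G d⁻¹ = S - 1 := by
    have hbi : ∑ d ∈ Finset.univ.biUnion D, MonoidAlgebra.of ℤ G d⁻¹
        = ∑ i : Fin m, ∑ d ∈ D i, MonoidAlgebra.of ℤ G d⁻¹ :=
      Finset.sum_biUnion (fun i _ j _ hij => hdisj i j hij)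
    rw [← hbi, hpart, Finset.sum_erase_eq_sub (Finset.mem_univ (1 : G))]
    have hinv : ∑ g : G, MonoidAlgebra.of ℤ G g⁻¹ = S :=
      Fintype.sum_equiv (Equiv.inv G) _ _ (fun g => rfl)
    rw [hinv]
    simp [MonoidAlgebra.one_def]
  have hSinv : ∀ j : Fin m,
      (∑ i ∈ Finset.univ.erase j, ∑ d ∈ D i, MonoidAlgebra.of ℤ G d⁻¹)
        = S - 1 - ∑ d ∈ D j, MonoidAlgebra.of ℤ G d⁻¹ := by
    intro j
    rw [Finset.sum_erase_eq_sub (Finset.mem_univ j), htot]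
  -- translation invariance: A_j * S = k • S
  have hAS : ∀ j : Fin m,
      (∑ d ∈ D j, MonoidAlgebra.of ℤ G d) * S = ((k : ℤ) : MonoidAlgebra ℤ G) * S := by
    intro j
    rw [Finset.sum_mul]
    have hdS : ∀ d ∈ D j, MonoidAlgebra.of ℤ G d * S = S := by
      intro d _
      rw [hSdef, Finset.mul_sum]
      refine Fintype.sum_equiv (Equiv.mulLeft d) _ _ (fun g => ?_)
      simp [← map_mul]
    rw [Finset.sum_congr rfl hdS, Finset.sum_const, hsize j]
    rw [← natCast_zsmul, zsmul_eq_mul]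
  constructor
  · rintro ⟨-, -, -, -, heq⟩
    intro j
    have h := heq j
    rw [hSinv j] at h
    have hs := hAS j
    simp only [zsmul_eq_mul] at h ⊢
    push_cast at h hs ⊢
    linear_combination hs - h
  · intro hp
    refine ⟨hcard, hm, hsize, hdisj, fun j => ?_⟩
    rw [hSinv j]
    have h := hp j
    have hs := hAS j
    simp only [zsmul_eq_mul] at h ⊢
    push_cast at h hs ⊢
    linear_combination hs - h
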